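/- Let Λ be countable, (κ_λ)_λ ∈ (0,∞)^Λ with sup_λ κ_λ < ∞, and let (φ_α)_{α>0} be a non-linear regularizing filter satisfying Assumption C with parameter γ ∈ (0, 1/sup_λ κ_λ²) and contraction factors ℓ_α ∈ (0,1). For each α and λ choose a proper, convex, lower semicontinuous s_{α,λ} : ℝ → [0,∞] with s_{α,λ}(0) = 0 and prox_{s_{α,λ}} = φ_α(κ_λ,·), and define D_α : ℓ²(Λ) → ℓ²(Λ) componentwise by D_α((x_λ)_λ) := (prox_{γ·s_{α,λ}(κ_λ·)}(x_λ))_λ. Then (D_α)_{α>0} is an admissible family of denoisers: (D1) each D_α is Lipschitz with constant ℓ_α < 1; (D2) for every x ∈ ℓ²(Λ), D_α(x) → x in norm as α → 0 (and ℓ_α → 1 as α → 0); (D3) for every bounded set B ⊆ ℓ²(Λ) and every z ∈ ℓ²(Λ), sup_{x∈B} ⟨D_α(x) − x, z⟩ → 0 as α → 0; (D4) for every x ∈ ℓ²(Λ) there is M_x < ∞ with ‖x − D_α(x)‖/(1 − Lip(D_α)) ≤ M_x for all sufficiently small α > 0. -/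

import Mathlib

open scoped ENNReal RealInnerProductSpace
open Filter

noncomputable section

/-- `p` is the (unique) proximal point at `x` of the `[0,∞]`-valued functional `s`. -/
def IsProxPtE (s : ℝ → ℝ≥0∞) (x p : ℝ) : Prop :=
  (∀ y : ℝ, ENNReal.ofReal ((x - p) ^ 2 / 2) + s p ≤ ENNReal.ofReal ((x - y) ^ 2 / 2) + s y) ∧
  ∀ q : ℝ, (∀ y : ℝ, ENNReal.ofReal ((x - q) ^ 2 / 2) + s q ≤
    ENNReal.ofReal ((x - y) ^ 2 / 2) + s y) → q = p

/-- Convexity for `[0,∞]`-valued functions on `ℝ`. -/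
def ENNConvexOn (s : ℝ → ℝ≥0∞) : Prop :=
  ∀ x y : ℝ, ∀ a b : ℝ, 0 ≤ a → 0 ≤ b → a + b = 1 →
    s (a * x + b * y) ≤ ENNReal.ofReal a * s x + ENNReal.ofReal b * s y

/-- A non-linear regularizing filter: `φ α κ` is (F1) monotone, (F2) nonexpansive,
(F3) zero at zero, and (F4) converges pointwise to the identity as `α → 0`. -/
def IsRegFilter (φ : ℝ → ℝ → ℝ → ℝ) : Prop :=
  (∀ α > (0 : ℝ), ∀ κ > (0 : ℝ), Monotone (φ α κ)) ∧
  (∀ α > (0 : ℝ), ∀ κ > (0 : ℝ), ∀ x y : ℝ, |φ α κ x - φ α κ y| ≤ |x - y|) ∧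
  (∀ α > (0 : ℝ), ∀ κ > (0 : ℝ), φ α κ 0 = 0) ∧
  (∀ κ > (0 : ℝ), ∀ c : ℝ,
    Tendsto (fun α => φ α κ c) (nhdsWithin 0 (Set.Ioi 0)) (nhds c))

/-- Assumption B: (B1) `α ↦ |φ_α(κ,x)|` increases as `α` decreases, and (B2) there are
`d, e > 0` with `|φ_α(κ,x)| ≤ (eκ/√α)·|x|` whenever `|x| ≤ dα/κ`. -/
def AssumptionB (φ : ℝ → ℝ → ℝ → ℝ) : Prop :=
  (∀ κ > (0 : ℝ), ∀ x : ℝ, ∀ α β : ℝ, 0 < α → α ≤ β → |φ β κ x| ≤ |φ α κ x|) ∧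
  (∃ d > (0 : ℝ), ∃ e > (0 : ℝ), ∀ κ > (0 : ℝ), ∀ α > (0 : ℝ), ∀ x : ℝ,
    |x| ≤ d * α / κ → |φ α κ x| ≤ e * κ / Real.sqrt α * |x|)

set_option maxHeartbeats 1000000

lemma aux_le_of_forall_t {a c d : ℝ} (hd : 0 ≤ d)
    (h : ∀ t : ℝ, 0 < t → t ≤ 1 → a ≤ c + t * d) : a ≤ c := by
  by_contra hac
  push_neg at hac
  have ht0 : 0 < min 1 ((a - c) / (2 * (d + 1))) :=
    lt_min one_pos (div_pos (by linarith) (by linarith))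
  have h1 := h _ ht0 (min_le_left _ _)
  have hm : min 1 ((a - c) / (2 * (d + 1))) ≤ (a - c) / (2 * (d + 1)) := min_le_right _ _
  have h3 : (a - c) / (2 * (d + 1)) * d ≤ (a - c) / 2 := by
    rw [div_mul_eq_mul_div, div_le_div_iff₀ (by linarith) (by norm_num)]
    nlinarith
  nlinarith [mul_le_mul_of_nonneg_right hm hd]

lemma ofReal_ineq_to_real {u w a b g : ℝ} (hu : 0 ≤ u) (hw : 0 ≤ w) (ha : 0 ≤ a) (hb : 0 ≤ b)
    (hg : 0 ≤ g)
    (h : ENNReal.ofReal u + ENNReal.ofReal g * ENNReal.ofReal a ≤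
      ENNReal.ofReal w + ENNReal.ofReal g * ENNReal.ofReal b) :
    u + g * a ≤ w + g * b := by
  rw [← ENNReal.ofReal_mul hg, ← ENNReal.ofReal_mul hg,
    ← ENNReal.ofReal_add hu (by positivity), ← ENNReal.ofReal_add hw (by positivity),
    ENNReal.ofReal_le_ofReal_iff (by positivity)] at h
  exact h

section OneD

variable {k γ : ℝ} {S : ℝ → ℝ≥0∞} {f ψ : ℝ → ℝ}

lemma psi_zero (hS0 : S 0 = 0)
    (hψprox : ∀ x, IsProxPtE (fun y => ENNReal.ofReal γ * S (k * y)) x (ψ x)) :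
    ψ 0 = 0 := by
  refine ((hψprox 0).2 0 ?_).symm
  intro y
  have : ENNReal.ofReal (((0:ℝ) - 0) ^ 2 / 2) + ENNReal.ofReal γ * S (k * 0) = 0 := by
    simp [hS0]
  rw [this]
  exact zero_le

lemma S_fin (hγ : 0 < γ) (hS0 : S 0 = 0)
    (hψprox : ∀ x, IsProxPtE (fun y => ENNReal.ofReal γ * S (k * y)) x (ψ x)) (x : ℝ) :
    S (k * ψ x) ≠ ⊤ := by
  have h := (hψprox x).1 0
  simp only [mul_zero, hS0] at h
  intro htop
  rw [htop, ENNReal.mul_top (by simp [ENNReal.ofReal_eq_zero]; linarith)] at h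
  simp at h

lemma psi_opt (hk : 0 < k) (hγ : 0 < γ) (hconv : ENNConvexOn S)
    (hψprox : ∀ x, IsProxPtE (fun y => ENNReal.ofReal γ * S (k * y)) x (ψ x))
    (x z : ℝ) {a b : ℝ} (ha0 : 0 ≤ a) (hb0 : 0 ≤ b)
    (hax : S (k * ψ x) = ENNReal.ofReal a) (hbz : S z = ENNReal.ofReal b) :
    γ * (a - b) ≤ -((x - ψ x) * ((z - k * ψ x) / k)) := by
  set r : ℝ := (z - k * ψ x) / k with hr
  apply aux_le_of_forall_t (d := r ^ 2 / 2) (by positivity)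
  intro t ht0 ht1
  have hmin := (hψprox x).1 (((1 - t) * (k * ψ x) + t * z) / k)
  have hkk : k * (((1 - t) * (k * ψ x) + t * z) / k) = (1 - t) * (k * ψ x) + t * z := by
    field_simp
  have hcv := hconv (k * ψ x) z (1 - t) t (by linarith) ht0.le (by ring)
  rw [hax, hbz, ← ENNReal.ofReal_mul (by linarith), ← ENNReal.ofReal_mul ht0.le,
    ← ENNReal.ofReal_add (mul_nonneg (by linarith) ha0) (mul_nonneg ht0.le hb0)] at hcv
  simp only [hkk] at hmin
  rw [hax] at hmin
  have hchain := hmin.trans (add_le_add_right (mul_le_mul_right hcv _) _)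
  have hre := ofReal_ineq_to_real (by positivity) (by positivity) ha0
    (add_nonneg (mul_nonneg (by linarith) ha0) (mul_nonneg ht0.le hb0)) hγ.le hchain
  have hpt : ((1 - t) * (k * ψ x) + t * z) / k = ψ x + t * r := by
    rw [hr]; field_simp; ring
  rw [hpt] at hre
  have hE : 0 ≤ t * (-((x - ψ x) * r) + t * (r ^ 2 / 2) - γ * (a - b)) := by nlinarith [hre]
  nlinarith [hE, ht0]

lemma psi_firm (hk : 0 < k) (hγ : 0 < γ) (hS0 : S 0 = 0) (hconv : ENNConvexOn S)
    (hψprox : ∀ x, IsProxPtE (fun y => ENNReal.ofReal γ * S (k * y)) x (ψ x)) (x y : ℝ) :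
    (ψ x - ψ y) ^ 2 ≤ (x - y) * (ψ x - ψ y) := by
  obtain ⟨a, ha0, hax⟩ : ∃ a, 0 ≤ a ∧ S (k * ψ x) = ENNReal.ofReal a :=
    ⟨(S (k * ψ x)).toReal, ENNReal.toReal_nonneg,
      (ENNReal.ofReal_toReal (S_fin hγ hS0 hψprox x)).symm⟩
  obtain ⟨b, hb0, hby⟩ : ∃ b, 0 ≤ b ∧ S (k * ψ y) = ENNReal.ofReal b :=
    ⟨(S (k * ψ y)).toReal, ENNReal.toReal_nonneg,
      (ENNReal.ofReal_toReal (S_fin hγ hS0 hψprox y)).symm⟩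
  have h1 := psi_opt hk hγ hconv hψprox x (k * ψ y) ha0 hb0 hax hby
  have h2 := psi_opt hk hγ hconv hψprox y (k * ψ x) hb0 ha0 hby hax
  have hr1 : (k * ψ y - k * ψ x) / k = ψ y - ψ x := by field_simp
  have hr2 : (k * ψ x - k * ψ y) / k = ψ x - ψ y := by field_simp
  rw [hr1] at h1
  rw [hr2] at h2
  nlinarith [h1, h2]


lemma prox_identity (hk : 0 < k) (hγ : 0 < γ) (hS0 : S 0 = 0) (hconv : ENNConvexOn S)
    (hprox : ∀ x, IsProxPtE S x (f x))
    (hψprox : ∀ x, IsProxPtE (fun y => ENNReal.ofReal γ * S (k * y)) x (ψ x)) (x : ℝ) :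
    f (k * ψ x + (x - ψ x) / (γ * k)) = k * ψ x := by
  set P : ℝ := k * ψ x with hP
  set V : ℝ := P + (x - ψ x) / (γ * k) with hV
  clear_value P V
  refine ((hprox V).2 P ?_).symm
  intro y
  by_cases hy : S y = ⊤
  · rw [hy]
    exact le_trans le_top (by simp)
  obtain ⟨a, ha0, hax⟩ : ∃ a, 0 ≤ a ∧ S (k * ψ x) = ENNReal.ofReal a :=
    ⟨(S (k * ψ x)).toReal, ENNReal.toReal_nonneg,
      (ENNReal.ofReal_toReal (S_fin hγ hS0 hψprox x)).symm⟩
  obtain ⟨b, hb0, hby⟩ : ∃ b, 0 ≤ b ∧ S y = ENNReal.ofReal b :=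
    ⟨(S y).toReal, ENNReal.toReal_nonneg, (ENNReal.ofReal_toReal hy).symm⟩
  have claim := psi_opt hk hγ hconv hψprox x y ha0 hb0 hax hby
  rw [← hP] at claim hax
  have hVP : γ * k * (V - P) = x - ψ x := by rw [hV]; field_simp; ring
  have h1 : γ * ((V - P) * (P - y)) = -((x - ψ x) * ((y - P) / k)) := by
    rw [← hVP]; field_simp; ring
  have h2 : a - b ≤ (V - P) * (P - y) := by
    rw [← h1] at claim
    nlinarith [claim, hγ]
  have hgoal : (V - P) ^ 2 / 2 + a ≤ (V - y) ^ 2 / 2 + b := by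
    nlinarith [h2, sq_nonneg (P - y)]
  rw [hax, hby, ← ENNReal.ofReal_add (by positivity) ha0,
    ← ENNReal.ofReal_add (by positivity) hb0]
  exact ENNReal.ofReal_le_ofReal hgoal

lemma psi_lip {L : ℝ} (hk : 0 < k) (hγ : 0 < γ) (hτ1 : γ * k ^ 2 < 1)
    (hL0 : 0 < L) (hL1 : L < 1)
    (hS0 : S 0 = 0) (hconv : ENNConvexOn S)
    (hprox : ∀ x, IsProxPtE S x (f x))
    (hψprox : ∀ x, IsProxPtE (fun y => ENNReal.ofReal γ * S (k * y)) x (ψ x))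
    (hLip : ∀ x y, |f x - f y| ≤ γ * k ^ 2 * L / (1 - L * (1 - γ * k ^ 2)) * |x - y|)
    (x y : ℝ) : |ψ x - ψ y| ≤ L * |x - y| := by
  have hτ0 : 0 < γ * k ^ 2 := by positivity
  suffices h : ∀ x y : ℝ, y ≤ x → ψ x - ψ y ≤ L * (x - y) ∧ 0 ≤ ψ x - ψ y by
    rcases le_total y x with hxy | hxy
    · obtain ⟨h1, h2⟩ := h x y hxy
      rw [abs_of_nonneg h2, abs_of_nonneg (by linarith)]
      exact h1
    · obtain ⟨h1, h2⟩ := h y x hxy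
      rw [abs_sub_comm, abs_sub_comm x y, abs_of_nonneg h2, abs_of_nonneg (by linarith)]
      exact h1
  clear x y
  intro x y hxy
  have hfirm := psi_firm hk hγ hS0 hconv hψprox x y
  have hΔ0 : 0 ≤ ψ x - ψ y := by nlinarith [hfirm, sq_nonneg (ψ x - ψ y)]
  have hΔle : ψ x - ψ y ≤ x - y := by nlinarith [hfirm, sq_nonneg (ψ x - ψ y)]
  refine ⟨?_, hΔ0⟩
  set Δ : ℝ := ψ x - ψ y with hΔ
  set τ : ℝ := γ * k ^ 2 with hτ
  set den : ℝ := 1 - L * (1 - τ) with hden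
  have hdenpos : 0 < den := by rw [hden]; nlinarith
  have hfx := prox_identity hk hγ hS0 hconv hprox hψprox x
  have hfy := prox_identity hk hγ hS0 hconv hprox hψprox y
  set Vx : ℝ := k * ψ x + (x - ψ x) / (γ * k) with hVx
  set Vy : ℝ := k * ψ y + (y - ψ y) / (γ * k) with hVy
  have hID : γ * k * (Vx - Vy) = τ * Δ + ((x - y) - Δ) := by
    rw [hVx, hVy, hτ, hΔ]; field_simp; ring
  clear_value Δ τ den Vx Vy
  have hΔV0 : 0 ≤ Vx - Vy := by
    nlinarith [hID, mul_pos hγ hk]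
  have hlip := hLip Vx Vy
  rw [hfx, hfy] at hlip
  have habs1 : |k * ψ x - k * ψ y| = k * Δ := by
    rw [hΔ, abs_of_nonneg (by nlinarith)]; ring
  have habs2 : |Vx - Vy| = Vx - Vy := abs_of_nonneg hΔV0
  rw [habs1, habs2] at hlip
  have h2 : k * Δ * den ≤ τ * L * (Vx - Vy) := by
    have h' := mul_le_mul_of_nonneg_right hlip hdenpos.le
    calc k * Δ * den ≤ τ * L / den * (Vx - Vy) * den := h'
      _ = τ * L * (Vx - Vy) := by
            rw [div_mul_eq_mul_div, div_mul_cancel₀ _ hdenpos.ne']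
  have h3 := mul_le_mul_of_nonneg_left h2 (by positivity : (0:ℝ) ≤ γ * k)
  have h5 : Δ * den ≤ L * (τ * Δ + ((x - y) - Δ)) := by
    refine le_of_mul_le_mul_left ?_ hτ0
    calc τ * (Δ * den) = γ * k * (k * Δ * den) := by rw [hτ]; ring
      _ ≤ γ * k * (τ * L * (Vx - Vy)) := h3
      _ = τ * L * (γ * k * (Vx - Vy)) := by ring
      _ = τ * L * (τ * Δ + ((x - y) - Δ)) := by rw [hID]
      _ = τ * (L * (τ * Δ + ((x - y) - Δ))) := by ring
  rw [hden] at h5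
  nlinarith [h5]

lemma psi_resid {L Cc : ℝ} (hk : 0 < k) (hγ : 0 < γ) (hτ1 : γ * k ^ 2 < 1)
    (hL0 : 0 < L) (hL1 : L < 1) (hCc : 1 ≤ Cc) (hCle : Cc * (1 - L) ≤ 1)
    (hS0 : S 0 = 0) (hconv : ENNConvexOn S)
    (hprox : ∀ x, IsProxPtE S x (f x))
    (hψprox : ∀ x, IsProxPtE (fun y => ENNReal.ofReal γ * S (k * y)) x (ψ x))
    (hlow : ∀ x, γ * k ^ 2 * (1 - Cc * (1 - L)) /
        (1 - (1 - Cc * (1 - L)) * (1 - γ * k ^ 2)) * |x| ≤ |f x|)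
    (x : ℝ) : |ψ x - x| ≤ Cc * (1 - L) * |x| := by
  have hτ0 : 0 < γ * k ^ 2 := by positivity
  set τ : ℝ := γ * k ^ 2 with hτ
  set t' : ℝ := 1 - Cc * (1 - L) with ht'
  have ht'0 : 0 ≤ t' := by rw [ht']; linarith
  have ht'1 : t' < 1 := by rw [ht']; nlinarith
  set den2 : ℝ := 1 - t' * (1 - τ) with hden2
  have hden2pos : 0 < den2 := by rw [hden2]; nlinarith
  set u : ℝ := ψ x with hu
  have hψ0 := psi_zero hS0 hψprox
  have hfirm := psi_firm hk hγ hS0 hconv hψprox x 0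
  rw [hψ0, ← hu] at hfirm
  simp only [sub_zero] at hfirm
  set V : ℝ := k * u + (x - u) / (γ * k) with hV
  have hfV := prox_identity hk hγ hS0 hconv hprox hψprox x
  rw [← hu, ← hV] at hfV
  have hlowV := hlow V
  rw [hfV] at hlowV
  clear_value τ t' den2 u V
  have hID : γ * k * V = τ * u + (x - u) := by rw [hV, hτ]; field_simp
  rcases le_or_gt 0 x with hx0 | hx0
  · have hu0 : 0 ≤ u := by nlinarith [hfirm]
    have hux : u ≤ x := by nlinarith [hfirm]
    have hV0 : 0 ≤ V := by
      rw [hV]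
      have : 0 ≤ (x - u) / (γ * k) := div_nonneg (by linarith) (by positivity)
      nlinarith [mul_nonneg hk.le hu0]
    rw [abs_of_nonneg hV0, abs_of_nonneg (mul_nonneg hk.le hu0)] at hlowV
    -- τ * t' / den2 * V ≤ k * u
    have h2 : τ * t' * V ≤ k * u * den2 := by
      have h' := mul_le_mul_of_nonneg_right hlowV hden2pos.le
      calc τ * t' * V = τ * t' / den2 * V * den2 := by
            rw [div_mul_eq_mul_div, div_mul_cancel₀ _ hden2pos.ne']
        _ ≤ k * u * den2 := h'
    have h3 : t' * x ≤ u := by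
      have h4 := mul_le_mul_of_nonneg_left h2 (by positivity : (0:ℝ) ≤ γ * k)
      have h5 : γ * k * (τ * t' * V) = τ * t' * (τ * u + (x - u)) := by
        rw [show γ * k * (τ * t' * V) = τ * t' * (γ * k * V) from by ring, hID]
      have h6 : γ * k * (k * u * den2) = τ * (u * den2) := by rw [hτ]; ring
      rw [h5, h6] at h4
      have h7 : t' * (τ * u + (x - u)) ≤ u * den2 := by
        refine le_of_mul_le_mul_left ?_ hτ0
        calc τ * (t' * (τ * u + (x - u))) = τ * t' * (τ * u + (x - u)) := by ring
          _ ≤ τ * (u * den2) := h4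
      rw [hden2] at h7
      nlinarith [h7]
    rw [abs_of_nonpos (by linarith : u - x ≤ 0), abs_of_nonneg hx0]
    rw [ht'] at h3
    nlinarith [h3]
  · have hu0 : u ≤ 0 := by nlinarith [hfirm]
    have hux : x ≤ u := by nlinarith [hfirm]
    have hV0 : V ≤ 0 := by
      rw [hV]
      have : (x - u) / (γ * k) ≤ 0 :=
        div_nonpos_of_nonpos_of_nonneg (by linarith) (by positivity)
      nlinarith [mul_nonpos_of_nonneg_of_nonpos hk.le hu0]
    rw [abs_of_nonpos hV0, abs_of_nonpos (mul_nonpos_of_nonneg_of_nonpos hk.le hu0)] at hlowV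
    have h2 : τ * t' * (-V) ≤ -(k * u) * den2 := by
      have h' := mul_le_mul_of_nonneg_right hlowV hden2pos.le
      calc τ * t' * (-V) = τ * t' / den2 * (-V) * den2 := by
            rw [div_mul_eq_mul_div, div_mul_cancel₀ _ hden2pos.ne']
        _ ≤ -(k * u) * den2 := h'
    have h3 : u ≤ t' * x := by
      have h4 := mul_le_mul_of_nonneg_left h2 (by positivity : (0:ℝ) ≤ γ * k)
      have h5 : γ * k * (τ * t' * (-V)) = -(τ * t' * (τ * u + (x - u))) := by
        rw [show γ * k * (τ * t' * (-V)) = -(τ * t' * (γ * k * V)) from by ring, hID]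
      have h6 : γ * k * (-(k * u) * den2) = -(τ * (u * den2)) := by rw [hτ]; ring
      rw [h5, h6] at h4
      have h7 : u * den2 ≤ t' * (τ * u + (x - u)) := by
        refine le_of_mul_le_mul_left ?_ hτ0
        calc τ * (u * den2) ≤ τ * t' * (τ * u + (x - u)) := by linarith [h4]
          _ = τ * (t' * (τ * u + (x - u))) := by ring
      rw [hden2] at h7
      nlinarith [h7]
    rw [abs_of_nonneg (by linarith : 0 ≤ u - x), abs_of_nonpos hx0.le]
    rw [ht'] at h3
    nlinarith [h3]

end OneD

/-- **Reduction to PnP: admissible denoisers.** Under Assumption C, the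
componentwise proximity operators `D_α = (prox_{γ·s_{α,λ}(κ_λ·)})_λ` form an admissible
family of denoisers on `ℓ²(Λ)`: (D1) `D_α` is a contraction with constant `ℓ_α < 1`;
(D2) `D_α x → x` in norm as `α → 0` (and `ℓ_α → 1`); (D3) uniform weak convergence on
bounded sets; (D4) `‖x − D_α x‖/(1 − ℓ_α)` stays bounded as `α → 0`. -/
theorem statement12 {Λ : Type*} [Countable Λ] [Nonempty Λ]
    (κ : Λ → ℝ) (hκ : ∀ l, 0 < κ l) (hκbd : BddAbove (Set.range fun l => κ l ^ 2))
    (φ : ℝ → ℝ → ℝ → ℝ) (hfilter : IsRegFilter φ)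
    (γ : ℝ) (hγ0 : 0 < γ) (hγ1 : γ < 1 / sSup (Set.range fun l => κ l ^ 2))
    (ℓ : ℝ → ℝ) (hℓ : ∀ α > (0 : ℝ), 0 < ℓ α ∧ ℓ α < 1)
    (hC1 : ∀ α > (0 : ℝ), ∀ l : Λ, ∀ x y : ℝ,
      |φ α (κ l) x - φ α (κ l) y| ≤
        γ * κ l ^ 2 * ℓ α / (1 - ℓ α * (1 - γ * κ l ^ 2)) * |x - y|)
    (hC2 : ∃ C : ℝ, 1 ≤ C ∧ ∀ l : Λ, ∀ α > (0 : ℝ), C ≤ 1 / (1 - ℓ α) →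
      ∀ x : ℝ, γ * κ l ^ 2 * (1 - C * (1 - ℓ α)) /
          (1 - (1 - C * (1 - ℓ α)) * (1 - γ * κ l ^ 2)) * |x| ≤ |φ α (κ l) x|)
    (s : ℝ → Λ → ℝ → ℝ≥0∞)
    (hs : ∀ α > (0 : ℝ), ∀ l : Λ, (∃ x, s α l x ≠ ⊤) ∧ ENNConvexOn (s α l) ∧
      LowerSemicontinuous (s α l) ∧ s α l 0 = 0 ∧
      ∀ x : ℝ, IsProxPtE (s α l) x (φ α (κ l) x))
    (ψ : ℝ → Λ → ℝ → ℝ)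
    (hψ : ∀ α > (0 : ℝ), ∀ l : Λ, ∀ x : ℝ,
      IsProxPtE (fun y => ENNReal.ofReal γ * s α l (κ l * y)) x (ψ α l x)) :
    ∃ D : ℝ → lp (fun _ : Λ => ℝ) 2 → lp (fun _ : Λ => ℝ) 2,
      (∀ α > (0 : ℝ), ∀ x : lp (fun _ : Λ => ℝ) 2, ∀ l : Λ, (D α x) l = ψ α l (x l)) ∧
      (∀ α > (0 : ℝ), ∀ x y : lp (fun _ : Λ => ℝ) 2, ‖D α x - D α y‖ ≤ ℓ α * ‖x - y‖) ∧
      (∀ x : lp (fun _ : Λ => ℝ) 2,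
        Tendsto (fun α => ‖D α x - x‖) (nhdsWithin 0 (Set.Ioi 0)) (nhds 0)) ∧
      Tendsto ℓ (nhdsWithin 0 (Set.Ioi 0)) (nhds 1) ∧
      (∀ B : Set (lp (fun _ : Λ => ℝ) 2), Bornology.IsBounded B →
        ∀ z : lp (fun _ : Λ => ℝ) 2,
          Tendsto (fun α => ⨆ x ∈ B, ⟪D α x - x, z⟫) (nhdsWithin 0 (Set.Ioi 0)) (nhds 0)) ∧
      (∀ x : lp (fun _ : Λ => ℝ) 2, ∃ M : ℝ,
        ∀ᶠ α in nhdsWithin 0 (Set.Ioi 0), ‖x - D α x‖ / (1 - ℓ α) ≤ M) := by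
  classical
  obtain ⟨hmono, hnonexp, hzero, hF4⟩ := hfilter
  obtain ⟨C, hCge1, hC2'⟩ := hC2
  have hC0 : (0:ℝ) < C := lt_of_lt_of_le one_pos hCge1
  have hτ1 : ∀ l : Λ, γ * κ l ^ 2 < 1 := by
    intro l
    have hle : κ l ^ 2 ≤ sSup (Set.range fun l => κ l ^ 2) := le_csSup hκbd ⟨l, rfl⟩
    have hpos : 0 < sSup (Set.range fun l => κ l ^ 2) :=
      lt_of_lt_of_le (pow_pos (hκ l) 2) hle
    rw [lt_div_iff₀ hpos] at hγ1
    nlinarith [mul_le_mul_of_nonneg_left hle hγ0.le]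
  have key : ∀ α, 0 < α → ∀ l : Λ, (ψ α l 0 = 0) ∧
      (∀ x y : ℝ, |ψ α l x - ψ α l y| ≤ ℓ α * |x - y|) ∧
      (C * (1 - ℓ α) ≤ 1 → ∀ x : ℝ, |ψ α l x - x| ≤ C * (1 - ℓ α) * |x|) := by
    intro α hα l
    obtain ⟨-, hconv, -, hs0, hproxφ⟩ := hs α hα l
    obtain ⟨hl0, hl1⟩ := hℓ α hα
    refine ⟨psi_zero hs0 (hψ α hα l), ?_, ?_⟩
    · exact psi_lip (hκ l) hγ0 (hτ1 l) hl0 hl1 hs0 hconv hproxφ (hψ α hα l) (hC1 α hα l)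
    · intro hcle
      refine psi_resid (hκ l) hγ0 (hτ1 l) hl0 hl1 hCge1 hcle hs0 hconv hproxφ
        (hψ α hα l) ?_
      intro x
      exact hC2' l α hα ((le_div_iff₀ (by linarith)).2 hcle) x
  have hψbd : ∀ α, 0 < α → ∀ (l : Λ) (t : ℝ), |ψ α l t| ≤ |t| := by
    intro α hα l t
    have h := (key α hα l).2.1 t 0
    rw [(key α hα l).1, sub_zero, sub_zero] at h
    obtain ⟨hl0, hl1⟩ := hℓ α hα
    nlinarith [abs_nonneg t, h]
  have hmem : ∀ α, 0 < α → ∀ x : lp (fun _ : Λ => ℝ) 2,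
      Memℓp (fun l => ψ α l (x l)) 2 := by
    intro α hα x
    have hp : 0 < (2 : ℝ≥0∞).toReal := by norm_num
    apply memℓp_gen
    refine Summable.of_nonneg_of_le (fun l => ?_) (fun l => ?_) ((lp.memℓp x).summable hp)
    · positivity
    · refine Real.rpow_le_rpow (norm_nonneg _) ?_ hp.le
      rw [Real.norm_eq_abs, Real.norm_eq_abs]
      exact hψbd α hα l (x l)
  set D : ℝ → lp (fun _ : Λ => ℝ) 2 → lp (fun _ : Λ => ℝ) 2 := fun α x =>
    if hα : 0 < α then ⟨fun l => ψ α l (x l), hmem α hα x⟩ else x with hD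
  have hDcoe : ∀ α, 0 < α → ∀ (x : lp (fun _ : Λ => ℝ) 2) (l : Λ),
      (D α x) l = ψ α l (x l) := by
    intro α hα x l
    simp only [hD, dif_pos hα]
  have hnormle : ∀ (u v : lp (fun _ : Λ => ℝ) 2) (c : ℝ), 0 ≤ c →
      (∀ l, |u l| ≤ c * |v l|) → ‖u‖ ≤ c * ‖v‖ := by
    intro u v c hc h
    have hp : 0 < (2 : ℝ≥0∞).toReal := by norm_num
    by_contra hcon
    push_neg at hcon
    have hle : ‖u‖ ^ (2:ℝ≥0∞).toReal ≤ (c * ‖v‖) ^ (2:ℝ≥0∞).toReal := by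
      rw [lp.norm_rpow_eq_tsum hp u, Real.mul_rpow hc (norm_nonneg v),
        lp.norm_rpow_eq_tsum hp v, ← tsum_mul_left]
      refine Summable.tsum_le_tsum (fun l => ?_) ((lp.memℓp u).summable hp) ?_
      · rw [← Real.mul_rpow hc (norm_nonneg _)]
        refine Real.rpow_le_rpow (norm_nonneg _) ?_ hp.le
        rw [Real.norm_eq_abs, Real.norm_eq_abs]
        exact h l
      · exact ((lp.memℓp v).summable hp).mul_left _
    have hlt : (c * ‖v‖) ^ (2:ℝ≥0∞).toReal < ‖u‖ ^ (2:ℝ≥0∞).toReal :=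
      Real.rpow_lt_rpow (by positivity) hcon hp
    linarith
  have hltend : Tendsto ℓ (nhdsWithin 0 (Set.Ioi 0)) (nhds 1) := by
    have l₀ : Λ := Classical.arbitrary Λ
    have hk₀ := hκ l₀
    have hτ₀0 : 0 < γ * κ l₀ ^ 2 := by positivity
    have hτ₀1 : γ * κ l₀ ^ 2 < 1 := hτ1 l₀
    rw [Metric.tendsto_nhds]
    intro ε hε
    have hδ0 : 0 < min ε 1 := lt_min hε one_pos
    have hδ1 : min ε 1 ≤ 1 := min_le_right _ _
    have hδε : min ε 1 ≤ ε := min_le_left _ _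
    have hden2 : 0 < 1 - (1 - min ε 1) * (1 - γ * κ l₀ ^ 2) := by nlinarith
    have hlt : γ * κ l₀ ^ 2 * (1 - min ε 1) / (1 - (1 - min ε 1) * (1 - γ * κ l₀ ^ 2))
        < 1 := by
      rw [div_lt_one hden2]; nlinarith
    have hev := (hF4 (κ l₀) hk₀ 1).eventually (eventually_gt_nhds hlt)
    filter_upwards [hev, self_mem_nhdsWithin] with α hφgt hαmem
    have hα : (0:ℝ) < α := hαmem
    obtain ⟨hl0, hl1⟩ := hℓ α hα
    rw [Real.dist_eq, abs_of_nonpos (by linarith : ℓ α - 1 ≤ 0)]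
    by_contra hcon
    push_neg at hcon
    have hℓle : ℓ α ≤ 1 - min ε 1 := by linarith
    have hden1 : 0 < 1 - ℓ α * (1 - γ * κ l₀ ^ 2) := by nlinarith
    have hφb := hC1 α hα l₀ 1 0
    rw [hzero α hα (κ l₀) hk₀] at hφb
    rw [sub_zero, sub_zero, abs_one, mul_one] at hφb
    have hmono2 : γ * κ l₀ ^ 2 * ℓ α / (1 - ℓ α * (1 - γ * κ l₀ ^ 2)) ≤
        γ * κ l₀ ^ 2 * (1 - min ε 1) / (1 - (1 - min ε 1) * (1 - γ * κ l₀ ^ 2)) := by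
      rw [div_le_div_iff₀ hden1 hden2]
      nlinarith
    nlinarith [le_trans (le_abs_self _) (hφb.trans hmono2), hφgt]
  have hbtend : ∀ c : ℝ, Tendsto (fun α => C * (1 - ℓ α) * c)
      (nhdsWithin 0 (Set.Ioi 0)) (nhds 0) := by
    intro c
    have h0 : Tendsto (fun α : ℝ => 1 - ℓ α) (nhdsWithin (0:ℝ) (Set.Ioi 0))
        (nhds (1 - 1)) := Tendsto.sub tendsto_const_nhds hltend
    have h2 : Tendsto (fun α : ℝ => C * (1 - ℓ α) * c) (nhdsWithin (0:ℝ) (Set.Ioi 0))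
        (nhds (C * (1 - 1) * c)) := (h0.const_mul C).mul_const c
    simpa using h2
  have hev2 : ∀ᶠ α in nhdsWithin 0 (Set.Ioi 0), 0 < α ∧ C * (1 - ℓ α) ≤ 1 := by
    have h2 : ∀ᶠ α in nhdsWithin (0:ℝ) (Set.Ioi 0), 1 - 1 / C < ℓ α :=
      hltend.eventually (eventually_gt_nhds
        (by nlinarith [one_div_pos.2 hC0] : 1 - 1 / C < 1))
    filter_upwards [h2, self_mem_nhdsWithin] with α h1 hmem
    refine ⟨hmem, ?_⟩
    have h3 : 1 - ℓ α < 1 / C := by linarith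
    have h4 := mul_lt_mul_of_pos_left h3 hC0
    rw [mul_one_div, div_self hC0.ne'] at h4
    exact h4.le
  have hresid : ∀ᶠ α in nhdsWithin 0 (Set.Ioi 0),
      ∀ x : lp (fun _ : Λ => ℝ) 2, ‖D α x - x‖ ≤ C * (1 - ℓ α) * ‖x‖ := by
    filter_upwards [hev2] with α hα2
    obtain ⟨hα, hcle⟩ := hα2
    intro x
    obtain ⟨hl0, hl1⟩ := hℓ α hα
    refine hnormle _ _ _ (by nlinarith : (0:ℝ) ≤ C * (1 - ℓ α)) ?_
    intro l
    simp only [lp.coeFn_sub, Pi.sub_apply]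
    rw [hDcoe α hα]
    exact (key α hα l).2.2 hcle (x l)
  have hD1 : ∀ α > (0:ℝ), ∀ x y : lp (fun _ : Λ => ℝ) 2,
      ‖D α x - D α y‖ ≤ ℓ α * ‖x - y‖ := by
    intro α hα x y
    refine hnormle _ _ _ (hℓ α hα).1.le ?_
    intro l
    simp only [lp.coeFn_sub, Pi.sub_apply]
    rw [hDcoe α hα, hDcoe α hα]
    exact (key α hα l).2.1 (x l) (y l)
  have hD2 : ∀ x : lp (fun _ : Λ => ℝ) 2,
      Tendsto (fun α => ‖D α x - x‖) (nhdsWithin 0 (Set.Ioi 0)) (nhds 0) := by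
    intro x
    refine squeeze_zero_norm' ?_ (hbtend ‖x‖)
    filter_upwards [hresid] with α h
    rw [Real.norm_eq_abs, abs_of_nonneg (norm_nonneg _)]
    exact h x
  have hD3 : ∀ B : Set (lp (fun _ : Λ => ℝ) 2), Bornology.IsBounded B →
      ∀ z : lp (fun _ : Λ => ℝ) 2,
        Tendsto (fun α => ⨆ x ∈ B, ⟪D α x - x, z⟫)
          (nhdsWithin 0 (Set.Ioi 0)) (nhds 0) := by
    intro B hB z
    rcases B.eq_empty_or_nonempty with rfl | ⟨x₀, hx₀⟩
    · have h0 : (fun α => ⨆ x ∈ (∅ : Set (lp (fun _ : Λ => ℝ) 2)), ⟪D α x - x, z⟫)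
          = fun _ => (0:ℝ) := by
        funext α
        simp [Set.mem_empty_iff_false, Real.iSup_of_isEmpty, ciSup_const]
      rw [h0]
      exact tendsto_const_nhds
    · obtain ⟨R, hR⟩ := isBounded_iff_forall_norm_le.1 hB
      have hR0 : 0 ≤ R := le_trans (norm_nonneg x₀) (hR x₀ hx₀)
      refine squeeze_zero_norm' ?_ (hbtend (R * ‖z‖))
      filter_upwards [hresid, hev2] with α hres hα2
      obtain ⟨hα, hcle⟩ := hα2
      obtain ⟨hl0, hl1⟩ := hℓ α hα
      have hcoef : 0 ≤ C * (1 - ℓ α) := by nlinarith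
      have hg0 : 0 ≤ C * (1 - ℓ α) * (R * ‖z‖) :=
        mul_nonneg hcoef (mul_nonneg hR0 (norm_nonneg z))
      have hbound : ∀ x ∈ B, |⟪D α x - x, z⟫| ≤ C * (1 - ℓ α) * (R * ‖z‖) := by
        intro x hx
        refine (abs_real_inner_le_norm _ _).trans ?_
        calc ‖D α x - x‖ * ‖z‖ ≤ C * (1 - ℓ α) * ‖x‖ * ‖z‖ :=
            mul_le_mul_of_nonneg_right (hres x) (norm_nonneg z)
          _ ≤ C * (1 - ℓ α) * (R * ‖z‖) := by
            nlinarith [hR x hx, norm_nonneg z, norm_nonneg x, hcoef,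
              mul_le_mul_of_nonneg_right (hR x hx) (norm_nonneg z)]
      rw [Real.norm_eq_abs, abs_le]
      constructor
      · have hbdd : BddAbove (Set.range fun x : lp (fun _ : Λ => ℝ) 2 =>
            ⨆ _ : x ∈ B, ⟪D α x - x, z⟫) := by
          refine ⟨C * (1 - ℓ α) * (R * ‖z‖), ?_⟩
          rintro v ⟨x, rfl⟩
          exact Real.iSup_le (fun hx => (abs_le.1 (hbound x hx)).2) hg0
        have h1 : ⟪D α x₀ - x₀, z⟫ ≤ ⨆ x ∈ B, ⟪D α x - x, z⟫ := by
          have h2 := le_ciSup hbdd x₀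
          rwa [ciSup_pos hx₀] at h2
        linarith [(abs_le.1 (hbound x₀ hx₀)).1]
      · exact Real.iSup_le
          (fun x => Real.iSup_le (fun hx => (abs_le.1 (hbound x hx)).2) hg0) hg0
  have hD4 : ∀ x : lp (fun _ : Λ => ℝ) 2, ∃ M : ℝ,
      ∀ᶠ α in nhdsWithin 0 (Set.Ioi 0), ‖x - D α x‖ / (1 - ℓ α) ≤ M := by
    intro x
    refine ⟨C * ‖x‖, ?_⟩
    filter_upwards [hresid, hev2] with α hres hα2
    obtain ⟨hα, hcle⟩ := hα2
    have h1 : 0 < 1 - ℓ α := by linarith [(hℓ α hα).2]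
    rw [div_le_iff₀ h1, norm_sub_rev]
    calc ‖D α x - x‖ ≤ C * (1 - ℓ α) * ‖x‖ := hres x
      _ = C * ‖x‖ * (1 - ℓ α) := by ring
  exact ⟨D, hDcoe, hD1, hD2, hltend, hD3, hD4⟩
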